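/- If β ∈ (β̄, μ_1) ∪ (μ_n, ∞), then (μ_j − β)·g(β) > 0 for every j, and the numbers α_j(β) := ((μ_j − β)·g(β))^{−1/2} are positive and satisfy the system (★): μ_j α_j(β)² + β·Σ_{k ≠ j} α_k(β)² = 1 for j = 1, …, n. -/

import Mathlib

/-- If `β ∈ (β̄, μ 0) ∪ (μ (n-1), ∞)` then `(μ_j - β) g(β) > 0` for every `j`,
and the numbers `α_j(β) = ((μ_j - β) g(β))^(-1/2)` are positive and solve the
system `μ_j α_j² + β ∑_{k ≠ j} α_k² = 1`. -/
theorem stmt_4 (n : ℕ) (hn : 2 ≤ n) (μ : Fin n → ℝ) (hμpos : ∀ k, 0 < μ k)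
    (hμmono : Monotone μ) (g : ℝ → ℝ)
    (hg : ∀ β : ℝ, g β = 1 + β * ∑ k, 1 / (μ k - β))
    (βbar : ℝ) (hβbar : βbar < 0) (hβbarzero : g βbar = 0)
    (β : ℝ)
    (hβ : β ∈ Set.Ioo βbar (μ ⟨0, by omega⟩) ∪ Set.Ioi (μ ⟨n - 1, by omega⟩))
    (α : Fin n → ℝ) (hα : ∀ j, α j = ((μ j - β) * g β) ^ (-(1 / 2) : ℝ)) :
    (∀ j, 0 < (μ j - β) * g β) ∧
    (∀ j, 0 < α j) ∧
    (∀ j, μ j * α j ^ 2 + β * ∑ k ∈ Finset.univ.erase j, α k ^ 2 = 1) := by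
  have hprod : ∀ j, 0 < (μ j - β) * g β := by
    rcases hβ with h | h
    · -- β ∈ (βbar, μ 0)
      have hlt : ∀ k, 0 < μ k - β := by
        intro k
        have h0k : μ ⟨0, by omega⟩ ≤ μ k := hμmono (by simp [Fin.le_def])
        have := h.2
        linarith
    -- g β > 0
      have hgpos : 0 < g β := by
        have hbb : ∀ k, 0 < μ k - βbar := by
          intro k
          have := hlt k
          have := h.1
          linarith
        have key : g β = ∑ k, μ k * (β - βbar) / ((μ k - β) * (μ k - βbar)) := by
          have : g β = g β - g βbar := by rw [hβbarzero]; ring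
          rw [this, hg β, hg βbar, Finset.mul_sum, Finset.mul_sum]
          rw [show (1 + ∑ k, β * (1 / (μ k - β))) - (1 + ∑ k, βbar * (1 / (μ k - βbar)))
              = ∑ k, (β * (1 / (μ k - β)) - βbar * (1 / (μ k - βbar))) by
            rw [Finset.sum_sub_distrib]; ring]
          refine Finset.sum_congr rfl fun k _ => ?_
          have h1 := (hlt k).ne'
          have h2 := (hbb k).ne'
          field_simp
          ring
        rw [key]
        refine Finset.sum_pos (fun k _ => ?_) ⟨⟨0, by omega⟩, Finset.mem_univ _⟩
        exact div_pos (mul_pos (hμpos k) (by linarith [h.1]))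
          (mul_pos (hlt k) (hbb k))
      intro j
      exact mul_pos (hlt j) hgpos
    · -- β > μ (n-1)
      have hlt : ∀ k, μ k - β < 0 := by
        intro k
        have hk : μ k ≤ μ ⟨n - 1, by omega⟩ := hμmono (by simp [Fin.le_def]; omega)
        have := Set.mem_Ioi.mp h
        linarith
      have hgneg : g β < 0 := by
        have key : g β = 1 + ∑ k, β / (μ k - β) := by
          rw [hg β, Finset.mul_sum]
          simp [div_eq_mul_inv]
        have hsum : ∑ k, β / (μ k - β) < ∑ _k : Fin n, (-1 : ℝ) := by
          refine Finset.sum_lt_sum_of_nonempty ⟨⟨0, by omega⟩, Finset.mem_univ _⟩ ?_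
          intro k _
          rw [div_lt_iff_of_neg (hlt k)]
          have := hμpos k
          linarith
        have : ∑ _k : Fin n, (-1 : ℝ) = -(n : ℝ) := by simp
        have hn2 : (2 : ℝ) ≤ (n : ℝ) := by exact_mod_cast hn
        rw [key]
        linarith
      intro j
      exact mul_pos_of_neg_of_neg (hlt j) hgneg
  -- g β ≠ 0 and μ k - β ≠ 0
  have hgne : g β ≠ 0 := by
    intro h0
    have := hprod ⟨0, by omega⟩
    rw [h0, mul_zero] at this
    exact lt_irrefl _ this
  have hne : ∀ k, μ k - β ≠ 0 := by
    intro k h0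
    have := hprod k
    rw [h0, zero_mul] at this
    exact lt_irrefl _ this
  have hαpos : ∀ j, 0 < α j := by
    intro j
    rw [hα j]
    exact Real.rpow_pos_of_pos (hprod j) _
  have hαsq : ∀ k, α k ^ 2 = ((μ k - β) * g β)⁻¹ := by
    intro k
    rw [hα k, ← Real.rpow_natCast (((μ k - β) * g β) ^ (-(1 / 2) : ℝ)) 2,
      ← Real.rpow_mul (hprod k).le]
    norm_num
    rw [Real.rpow_neg_one, mul_inv, mul_comm]
  refine ⟨hprod, hαpos, fun j => ?_⟩
  have hS : β * ∑ k, ((μ k - β) * g β)⁻¹ = (g β - 1) * (g β)⁻¹ := by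
    have h1 : ∑ k, ((μ k - β) * g β)⁻¹ = (∑ k, (μ k - β)⁻¹) * (g β)⁻¹ := by
      rw [Finset.sum_mul]
      exact Finset.sum_congr rfl fun k _ => mul_inv _ _
    have h2 : β * ∑ k, (μ k - β)⁻¹ = g β - 1 := by
      rw [hg β]; simp [one_div]
    rw [h1, ← mul_assoc, h2]
  simp only [hαsq]
  rw [Finset.sum_erase_eq_sub (Finset.mem_univ j), mul_sub, hS]
  have hj : (μ j - β) * ((μ j - β) * g β)⁻¹ = (g β)⁻¹ := by
    rw [mul_inv, ← mul_assoc, mul_inv_cancel₀ (hne j), one_mul]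
  have : μ j * ((μ j - β) * g β)⁻¹ - β * ((μ j - β) * g β)⁻¹ = (g β)⁻¹ := by
    rw [← sub_mul]; exact hj
  have hfin : μ j * ((μ j - β) * g β)⁻¹ +
      ((g β - 1) * (g β)⁻¹ - β * ((μ j - β) * g β)⁻¹)
      = (g β)⁻¹ + (g β - 1) * (g β)⁻¹ := by linarith
  rw [hfin]
  field_simp
  ring
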